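/- Let A ∈ M_n with W(A) ⊆ S_α for some α ∈ [0, π/2). Then for every s > 0 there exists a unitary matrix U ∈ M_n such that |A| ≤ (sec α / 2)·(s·Re A + s^{-1}·U* (Re A) U). -/

import Mathlib

open Matrix Set ComplexOrder

variable {m : Type*}

/-- The modulus `|X| = (XᴴX)^{1/2}` of a matrix. -/
noncomputable def matAbs [Fintype m] [DecidableEq m] (X : Matrix m m ℂ) : Matrix m m ℂ :=
  (Matrix.posSemidef_conjTranspose_mul_self X).1.eigenvectorUnitary.1 *
    diagonal ((↑) ∘ (√·) ∘ (Matrix.posSemidef_conjTranspose_mul_self X).1.eigenvalues) *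
    (star (Matrix.posSemidef_conjTranspose_mul_self X).1.eigenvectorUnitary : Matrix m m ℂ)

theorem matAbs_posSemidef [Fintype m] [DecidableEq m] (X : Matrix m m ℂ) :
    (matAbs X).PosSemidef := by
  unfold matAbs
  rw [Matrix.star_eq_conjTranspose]
  exact (Matrix.posSemidef_diagonal_iff.mpr (fun i => by
    simp only [Function.comp_apply]
    exact_mod_cast Real.sqrt_nonneg _)).mul_mul_conjTranspose_same _

/-- Functional calculus: apply `f : ℝ → ℝ` to a Hermitian matrix via its spectral
decomposition (junk value `0` for non-Hermitian input). -/
noncomputable def matFun [Fintype m] [DecidableEq m] (f : ℝ → ℝ) (X : Matrix m m ℂ) :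
    Matrix m m ℂ :=
  if h : X.IsHermitian then
    (h.eigenvectorUnitary : Matrix m m ℂ) *
      Matrix.diagonal (fun i => (f (h.eigenvalues i) : ℂ)) *
      star (h.eigenvectorUnitary : Matrix m m ℂ)
  else 0

/-- Real part `Re A = (A + Aᴴ)/2`. -/
noncomputable def reM (A : Matrix m m ℂ) : Matrix m m ℂ := (1/2 : ℂ) • (A + Aᴴ)

/-- Imaginary part `Im A = (A - Aᴴ)/(2i)`. -/
noncomputable def imM (A : Matrix m m ℂ) : Matrix m m ℂ := (1/(2*Complex.I)) • (A - Aᴴ)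

/-- Numerical range `W(A) = {x* A x : x*x = 1}`. -/
def numRange [Fintype m] (A : Matrix m m ℂ) : Set ℂ :=
  {z | ∃ x : m → ℂ, star x ⬝ᵥ x = 1 ∧ z = star x ⬝ᵥ A.mulVec x}

/-- The sector `S_α = {z : Re z ≥ 0, |Im z| ≤ (Re z) tan α}`. -/
def sector (α : ℝ) : Set ℂ := {z | 0 ≤ z.re ∧ |z.im| ≤ z.re * Real.tan α}

private lemma matAbs_mul_self {n : ℕ} (A : Matrix (Fin n) (Fin n) ℂ) :
    matAbs A * matAbs A = Aᴴ * A := by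
  have hPSD := Matrix.posSemidef_conjTranspose_mul_self A
  have hU : star (hPSD.1.eigenvectorUnitary : Matrix (Fin n) (Fin n) ℂ) *
      (hPSD.1.eigenvectorUnitary : Matrix (Fin n) (Fin n) ℂ) = 1 :=
    Matrix.mem_unitaryGroup_iff'.mp hPSD.1.eigenvectorUnitary.2
  conv_rhs => rw [hPSD.1.spectral_theorem, Unitary.conjStarAlgAut_apply]
  unfold matAbs
  rw [show ∀ X Y Z : Matrix (Fin n) (Fin n) ℂ, X * Y * Z * (X * Y * Z) = X * (Y * (Z * X) * Y) * Z by
    intro X Y Z; simp only [mul_assoc], hU, mul_one, diagonal_mul_diagonal]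
  congr 3
  funext i
  simp only [Function.comp_apply]
  rw [← Complex.ofReal_mul, Real.mul_self_sqrt (hPSD.eigenvalues_nonneg i)]
  rfl

open scoped MatrixOrder in
private lemma matAbs_eq_of_psd {n : ℕ} {A : Matrix (Fin n) (Fin n) ℂ} (hpsd : A.PosSemidef) :
    matAbs A = A :=
  (CFC.sq_eq_sq_iff (matAbs A) A (matAbs_posSemidef A).nonneg hpsd.nonneg).mp
    (by rw [pow_two, pow_two, matAbs_mul_self, hpsd.1.eq])



private lemma quad_nonneg_le {a b c : ℝ} (h : ∀ t : ℝ, 0 ≤ a * (t * t) + b * t + c)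
    (hb : 0 ≤ b) (ha : 0 ≤ a) (hc : 0 ≤ c) : b ≤ 2 * Real.sqrt (c * a) := by
  have hd := discrim_le_zero h
  rw [discrim] at hd
  nlinarith [Real.sq_sqrt (mul_nonneg hc ha), Real.sqrt_nonneg (c * a),
    sq_nonneg (b - 2 * Real.sqrt (c * a)), sq_nonneg (b + 2 * Real.sqrt (c * a))]

private lemma sqrt_add_sqrt_le {a b a' b' : ℝ} (ha : 0 ≤ a) (hb : 0 ≤ b) (ha' : 0 ≤ a')
    (hb' : 0 ≤ b') :
    Real.sqrt (a * b) + Real.sqrt (a' * b') ≤ Real.sqrt ((a + a') * (b + b')) := by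
  rw [Real.sqrt_mul ha, Real.sqrt_mul ha']
  have hL : 0 ≤ Real.sqrt a * Real.sqrt b + Real.sqrt a' * Real.sqrt b' := by positivity
  have key : (Real.sqrt a * Real.sqrt b + Real.sqrt a' * Real.sqrt b') ^ 2
      ≤ (a + a') * (b + b') := by
    nlinarith [Real.sq_sqrt ha, Real.sq_sqrt hb, Real.sq_sqrt ha', Real.sq_sqrt hb',
      Real.sqrt_nonneg a, Real.sqrt_nonneg b, Real.sqrt_nonneg a', Real.sqrt_nonneg b',
      sq_nonneg (Real.sqrt a * Real.sqrt b' - Real.sqrt a' * Real.sqrt b)]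
  calc Real.sqrt a * Real.sqrt b + Real.sqrt a' * Real.sqrt b'
      = Real.sqrt ((Real.sqrt a * Real.sqrt b + Real.sqrt a' * Real.sqrt b') ^ 2) :=
        (Real.sqrt_sq hL).symm
    _ ≤ Real.sqrt ((a + a') * (b + b')) := Real.sqrt_le_sqrt key

private lemma amgm_s {s a b : ℝ} (hs : 0 < s) (ha : 0 ≤ a) (hb : 0 ≤ b) :
    2 * Real.sqrt (a * b) ≤ s * a + s⁻¹ * b := by
  have h1 : Real.sqrt (s * a) * Real.sqrt (s⁻¹ * b) = Real.sqrt (a * b) := by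
    rw [← Real.sqrt_mul (by positivity)]
    congr 1
    field_simp
  nlinarith [sq_nonneg (Real.sqrt (s * a) - Real.sqrt (s⁻¹ * b)),
    Real.sq_sqrt (mul_nonneg hs.le ha), Real.sq_sqrt (mul_nonneg (inv_nonneg.2 hs.le) hb)]

private noncomputable def qf {n : ℕ} (A : Matrix (Fin n) (Fin n) ℂ) (z : Fin n → ℂ) : ℂ :=
  star z ⬝ᵥ A *ᵥ z

private lemma qf_add_smul {n : ℕ} (A : Matrix (Fin n) (Fin n) ℂ) (x y : Fin n → ℂ) (w : ℂ) :
    qf A (x + w • y) = qf A x + w * (star x ⬝ᵥ A *ᵥ y)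
      + (starRingEnd ℂ) w * (star y ⬝ᵥ A *ᵥ x) + (w * (starRingEnd ℂ) w) * qf A y := by
  simp only [qf, mulVec_add, mulVec_smul, dotProduct_add, add_dotProduct, star_add, star_smul,
    smul_dotProduct, dotProduct_smul, smul_eq_mul, Complex.star_def]
  ring

private lemma re_quad (ζ qx qy b c u : ℂ) (t : ℝ) :
    (ζ * (qx + ((t : ℂ) * u) * b + (starRingEnd ℂ) ((t : ℂ) * u) * c
        + (((t : ℂ) * u) * (starRingEnd ℂ) ((t : ℂ) * u)) * qy)).re
      = (ζ * qx).re
        + t * (((starRingEnd ℂ) u) * (ζ * c + (starRingEnd ℂ) ζ * (starRingEnd ℂ) b)).re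
        + (t * t) * Complex.normSq u * (ζ * qy).re := by
  simp [Complex.mul_re, Complex.mul_im, Complex.add_re, Complex.add_im, Complex.normSq_apply]
  ring

private lemma cs_bound {n : ℕ} (A : Matrix (Fin n) (Fin n) ℂ) (ζ : ℂ)
    (hg : ∀ z, 0 ≤ (ζ * qf A z).re) (x y : Fin n → ℂ) :
    ‖ζ * (star y ⬝ᵥ A *ᵥ x) + (starRingEnd ℂ) ζ * (starRingEnd ℂ) (star x ⬝ᵥ A *ᵥ y)‖
      ≤ 2 * Real.sqrt ((ζ * qf A x).re * (ζ * qf A y).re) := by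
  set b := star x ⬝ᵥ A *ᵥ y with hb
  set c := star y ⬝ᵥ A *ᵥ x with hc
  set w₀ := ζ * c + (starRingEnd ℂ) ζ * (starRingEnd ℂ) b with hw₀
  by_cases h0 : w₀ = 0
  · rw [h0]
    simp only [norm_zero]
    positivity
  · have habs : (0 : ℝ) < ‖w₀‖ := norm_pos_iff.mpr h0
    set u : ℂ := w₀ / ((‖w₀‖ : ℝ) : ℂ) with hu
    have huw : (starRingEnd ℂ) u * w₀ = ((‖w₀‖ : ℝ) : ℂ) := by
      rw [hu, map_div₀, Complex.conj_ofReal, div_mul_eq_mul_div,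
        mul_comm ((starRingEnd ℂ) w₀) w₀, Complex.mul_conj, Complex.normSq_eq_norm_sq]
      push_cast
      rw [pow_two, mul_div_assoc, div_self (by exact_mod_cast habs.ne'), mul_one]
    have hnormu : Complex.normSq u = 1 := by
      have h1 : ‖u‖ = 1 := by
        rw [hu, norm_div, Complex.norm_real, Real.norm_of_nonneg habs.le, div_self habs.ne']
      rw [← Complex.sq_norm, h1]
      norm_num
    have hquad : ∀ t : ℝ, 0 ≤ (ζ * qf A y).re * (t * t) + ‖w₀‖ * t
        + (ζ * qf A x).re := by
      intro t
      have h := hg (x + ((t : ℂ) * u) • y)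
      rw [qf_add_smul, re_quad, huw, hnormu] at h
      simp only [Complex.ofReal_re, mul_one] at h
      linarith
    have := quad_nonneg_le hquad (norm_nonneg _) (hg y) (hg x)
    linarith

private lemma qf_cone {n : ℕ} {A : Matrix (Fin n) (Fin n) ℂ} {α : ℝ}
    (hA : numRange A ⊆ sector α) (z : Fin n → ℂ) :
    0 ≤ (qf A z).re ∧ |(qf A z).im| ≤ (qf A z).re * Real.tan α := by
  by_cases hz : z = 0
  · subst hz
    simp [qf]
  · obtain ⟨i, hi⟩ := Function.ne_iff.mp hz
    have hi' : z i ≠ 0 := by simpa using hi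
    set r := ∑ j, Complex.normSq (z j) with hr
    have hrpos : 0 < r :=
      Finset.sum_pos' (fun j _ => Complex.normSq_nonneg _)
        ⟨i, Finset.mem_univ i, Complex.normSq_pos.mpr hi'⟩
    have hzz : star z ⬝ᵥ z = (r : ℂ) := by
      rw [hr]
      push_cast
      simp [dotProduct, Complex.normSq_eq_conj_mul_self, Complex.star_def]
    set κ : ℝ := (Real.sqrt r)⁻¹ with hκ
    have hκsq : (κ : ℂ) * (κ : ℂ) * (r : ℂ) = 1 := by
      have h5 : Real.sqrt r * Real.sqrt r = r := Real.mul_self_sqrt hrpos.le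
      have h6 : κ * κ * r = 1 := by
        rw [hκ, ← mul_inv, h5]
        exact inv_mul_cancel₀ hrpos.ne'
      exact_mod_cast h6
    set w : Fin n → ℂ := ((κ : ℂ)) • z with hw
    have hw1 : star w ⬝ᵥ w = 1 := by
      rw [hw, star_smul, smul_dotProduct, dotProduct_smul, hzz]
      simp only [Complex.star_def, Complex.conj_ofReal, smul_eq_mul]
      linear_combination hκsq
    have hqfw : qf A w = (κ : ℂ) * ((κ : ℂ) * qf A z) := by
      rw [hw]
      simp only [qf, star_smul, smul_dotProduct, dotProduct_smul, mulVec_smul, smul_eq_mul,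
        Complex.star_def, Complex.conj_ofReal]
    have hmem : qf A w ∈ sector α := hA ⟨w, hw1, rfl⟩
    have hscale : qf A z = (r : ℂ) * qf A w := by
      rw [hqfw]
      linear_combination -(qf A z) * hκsq
    obtain ⟨h1, h2⟩ := hmem
    constructor
    · rw [hscale]
      simp only [Complex.re_ofReal_mul]
      positivity
    · rw [hscale]
      simp only [Complex.re_ofReal_mul, Complex.im_ofReal_mul]
      rw [abs_mul, abs_of_pos hrpos]
      calc r * |(qf A w).im| ≤ r * ((qf A w).re * Real.tan α) :=
            mul_le_mul_of_nonneg_left h2 hrpos.le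
        _ = r * (qf A w).re * Real.tan α := by ring

private lemma key_abs_bound {n : ℕ} {A : Matrix (Fin n) (Fin n) ℂ} {α : ℝ}
    (hA : numRange A ⊆ sector α) (hα0 : 0 < α) (hα1 : α < Real.pi / 2) (x y : Fin n → ℂ) :
    Real.cos α * ‖star y ⬝ᵥ A *ᵥ x‖
      ≤ Real.sqrt ((qf A x).re * (qf A y).re) := by
  set sa := Real.sin α with hsa
  set ca := Real.cos α with hca
  have hsapos : 0 < sa := Real.sin_pos_of_pos_of_lt_pi hα0 (by linarith [Real.pi_pos])
  have hcapos : 0 < ca := Real.cos_pos_of_mem_Ioo ⟨by linarith [Real.pi_pos], hα1⟩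
  have htan : ca * Real.tan α = sa := by
    rw [hca, hsa, Real.tan_eq_sin_div_cos]
    field_simp [show Real.cos α ≠ 0 from hcapos.ne']
  set ζ : ℂ := (sa : ℂ) + (ca : ℂ) * Complex.I with hζ
  have hre : ζ.re = sa := by simp [hζ]
  have him : ζ.im = ca := by simp [hζ]
  have hzre : ∀ q : ℂ, (ζ * q).re = sa * q.re - ca * q.im := by
    intro q
    rw [Complex.mul_re, hre, him]
  have hzre' : ∀ q : ℂ, ((starRingEnd ℂ) ζ * q).re = sa * q.re + ca * q.im := by
    intro q
    rw [Complex.mul_re, Complex.conj_re, Complex.conj_im, hre, him]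
    ring
  have hgp : ∀ z, 0 ≤ (ζ * qf A z).re := by
    intro z
    obtain ⟨h1, h2⟩ := qf_cone hA z
    rw [hzre]
    have h3 : ca * (qf A z).im ≤ ca * |(qf A z).im| :=
      mul_le_mul_of_nonneg_left (le_abs_self _) hcapos.le
    have h4 : ca * |(qf A z).im| ≤ ca * ((qf A z).re * Real.tan α) :=
      mul_le_mul_of_nonneg_left h2 hcapos.le
    nlinarith
  have hgm : ∀ z, 0 ≤ ((starRingEnd ℂ) ζ * qf A z).re := by
    intro z
    obtain ⟨h1, h2⟩ := qf_cone hA z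
    rw [hzre']
    have h3 : -(ca * (qf A z).im) ≤ ca * |(qf A z).im| := by
      rw [← mul_neg]
      exact mul_le_mul_of_nonneg_left (neg_le_abs _) hcapos.le
    have h4 : ca * |(qf A z).im| ≤ ca * ((qf A z).re * Real.tan α) :=
      mul_le_mul_of_nonneg_left h2 hcapos.le
    nlinarith
  have hp := cs_bound A ζ hgp x y
  have hm := cs_bound A ((starRingEnd ℂ) ζ) hgm x y
  rw [Complex.conj_conj] at hm
  set b := star x ⬝ᵥ A *ᵥ y with hbd
  set c := star y ⬝ᵥ A *ᵥ x with hcd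
  set wp := ζ * c + (starRingEnd ℂ) ζ * (starRingEnd ℂ) b with hwp
  set wm := (starRingEnd ℂ) ζ * c + ζ * (starRingEnd ℂ) b with hwm
  have hid : (ζ ^ 2 - ((starRingEnd ℂ) ζ) ^ 2) * c = ζ * wp - (starRingEnd ℂ) ζ * wm := by
    rw [hwp, hwm]
    ring
  have habsζ : ‖ζ‖ = 1 := by
    have h1 : Complex.normSq ζ = 1 := by
      rw [Complex.normSq_apply, hre, him, ← pow_two, ← pow_two]
      exact Real.sin_sq_add_cos_sq α
    rw [Complex.norm_def, h1, Real.sqrt_one]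
  have hdiff : ζ ^ 2 - ((starRingEnd ℂ) ζ) ^ 2 = Complex.I * ((4 * sa * ca : ℝ) : ℂ) := by
    apply Complex.ext <;>
      · simp [pow_two, Complex.mul_re, Complex.mul_im, hre, him]
        try ring
  have habsdiff : ‖ζ ^ 2 - ((starRingEnd ℂ) ζ) ^ 2‖ = 4 * sa * ca := by
    rw [hdiff, norm_mul, Complex.norm_I, one_mul, Complex.norm_real, Real.norm_eq_abs]
    exact abs_of_pos (by nlinarith)
  have htri : ‖ζ * wp - (starRingEnd ℂ) ζ * wm‖
      ≤ ‖wp‖ + ‖wm‖ := by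
    calc ‖ζ * wp - (starRingEnd ℂ) ζ * wm‖
        ≤ ‖ζ * wp‖ + ‖(starRingEnd ℂ) ζ * wm‖ :=
          norm_sub_le _ _
      _ = ‖wp‖ + ‖wm‖ := by
          rw [norm_mul, norm_mul, Complex.norm_conj, habsζ, one_mul, one_mul]
  have hsum : ∀ z, (ζ * qf A z).re + ((starRingEnd ℂ) ζ * qf A z).re
      = 2 * sa * (qf A z).re := by
    intro z
    rw [hzre, hzre']
    ring
  have hcomb : Real.sqrt ((ζ * qf A x).re * (ζ * qf A y).re)
        + Real.sqrt (((starRingEnd ℂ) ζ * qf A x).re * ((starRingEnd ℂ) ζ * qf A y).re)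
      ≤ 2 * sa * Real.sqrt ((qf A x).re * (qf A y).re) := by
    have h := sqrt_add_sqrt_le (hgp x) (hgp y) (hgm x) (hgm y)
    rw [hsum x, hsum y] at h
    have heq : Real.sqrt (2 * sa * (qf A x).re * (2 * sa * (qf A y).re))
        = 2 * sa * Real.sqrt ((qf A x).re * (qf A y).re) := by
      rw [show 2 * sa * (qf A x).re * (2 * sa * (qf A y).re)
          = (2 * sa) ^ 2 * ((qf A x).re * (qf A y).re) by ring,
        Real.sqrt_mul (sq_nonneg _), Real.sqrt_sq (by positivity)]
    rw [heq] at h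
    exact h
  have hchain : 4 * sa * ca * ‖c‖
      ≤ 4 * sa * Real.sqrt ((qf A x).re * (qf A y).re) := by
    have h1 : 4 * sa * ca * ‖c‖
        = ‖(ζ ^ 2 - ((starRingEnd ℂ) ζ) ^ 2) * c‖ := by
      rw [norm_mul, habsdiff]
    rw [h1, hid]
    calc ‖ζ * wp - (starRingEnd ℂ) ζ * wm‖
        ≤ ‖wp‖ + ‖wm‖ := htri
      _ ≤ 2 * Real.sqrt ((ζ * qf A x).re * (ζ * qf A y).re)
            + 2 * Real.sqrt (((starRingEnd ℂ) ζ * qf A x).re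
              * ((starRingEnd ℂ) ζ * qf A y).re) := add_le_add hp hm
      _ ≤ 2 * (2 * sa * Real.sqrt ((qf A x).re * (qf A y).re)) := by linarith
      _ = 4 * sa * Real.sqrt ((qf A x).re * (qf A y).re) := by ring
  have h4 : (4 * sa) * (ca * ‖c‖)
      ≤ (4 * sa) * Real.sqrt ((qf A x).re * (qf A y).re) := by linarith
  exact le_of_mul_le_mul_left h4 (by linarith)

private lemma exists_polar {n : ℕ} (A : Matrix (Fin n) (Fin n) ℂ) :
    ∃ V ∈ Matrix.unitaryGroup (Fin n) ℂ, A = V * matAbs A := by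
  classical
  set P := matAbs A with hPdef
  have hP : P.PosSemidef := matAbs_posSemidef A
  have hPsq : P * P = Aᴴ * A := matAbs_mul_self A
  set W : Matrix (Fin n) (Fin n) ℂ := (hP.1.eigenvectorUnitary : Matrix (Fin n) (Fin n) ℂ)
    with hWdef
  have hWmem : W ∈ Matrix.unitaryGroup (Fin n) ℂ := (hP.1.eigenvectorUnitary).2
  have hWW : W * star W = 1 := (Matrix.mem_unitaryGroup_iff).mp hWmem
  have hWW' : star W * W = 1 := (Matrix.mem_unitaryGroup_iff').mp hWmem
  set ε : Fin n → ℝ := hP.1.eigenvalues with hεdef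
  have hεnn : ∀ i, 0 ≤ ε i := fun i => hP.eigenvalues_nonneg i
  set D : Matrix (Fin n) (Fin n) ℂ := Matrix.diagonal (fun i => (ε i : ℂ)) with hDdef
  have hspec : P = W * D * star W := hP.1.spectral_theorem
  have hPW : P * W = W * D := by
    rw [hspec, mul_assoc, hWW', mul_one]
  have hWP : star W * P = D * star W := by
    rw [hspec, ← mul_assoc, ← mul_assoc, hWW', one_mul]
  have hCC : star (A * W) * (A * W) = Matrix.diagonal (fun i => (ε i : ℂ) * (ε i : ℂ)) := by
    have h2 : star (A * W) * (A * W) = (star W * P) * (P * W) := by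
      rw [Matrix.star_mul, Matrix.star_eq_conjTranspose]
      calc Wᴴ * star A * (A * W) = Wᴴ * (star A * A) * W := by
            rw [mul_assoc, mul_assoc, mul_assoc]
        _ = Wᴴ * (P * P) * W := by rw [Matrix.star_eq_conjTranspose, hPsq]
        _ = (Wᴴ * P) * (P * W) := by rw [← mul_assoc, ← mul_assoc]
    rw [h2, hWP, hPW, mul_assoc, ← mul_assoc (star W) W, hWW', one_mul,
      Matrix.diagonal_mul_diagonal]
  have hCCentry : ∀ i j, (∑ k, (starRingEnd ℂ) ((A * W) k i) * (A * W) k j)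
      = Matrix.diagonal (fun i => (ε i : ℂ) * (ε i : ℂ)) i j := by
    intro i j
    rw [← hCC, Matrix.mul_apply]
    refine Finset.sum_congr rfl fun k _ => ?_
    rw [Matrix.star_apply, Complex.star_def]
  set s : Set (Fin n) := {i | ε i ≠ 0} with hs
  set v : Fin n → EuclideanSpace ℂ (Fin n) :=
    fun i => (WithLp.equiv 2 (Fin n → ℂ)).symm (fun r => ((ε i : ℂ))⁻¹ * (A * W) r i) with hv
  have hortho : Orthonormal ℂ (s.restrict v) := by
    rw [orthonormal_iff_ite]
    rintro ⟨i, hi⟩ ⟨j, hj⟩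
    have hinner : (inner ℂ (v i) (v j))
        = ((ε i : ℂ))⁻¹ * ((ε j : ℂ))⁻¹ * ∑ k, (starRingEnd ℂ) ((A * W) k i) * (A * W) k j := by
      rw [hv]
      simp only [WithLp.equiv_symm_apply]
      rw [EuclideanSpace.inner_toLp_toLp]
      simp only [dotProduct, Pi.star_apply, Complex.star_def, _root_.map_mul, map_inv₀,
        Complex.conj_ofReal, Finset.mul_sum]
      refine Finset.sum_congr rfl fun k _ => ?_
      ring
    show (inner ℂ (v i) (v j)) = _
    rw [hinner, hCCentry i j]
    by_cases hij : i = j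
    · subst hij
      rw [Matrix.diagonal_apply_eq]
      rw [if_pos rfl]
      have hine : ((ε i : ℝ) : ℂ) ≠ 0 := by
        simpa [hs] using hi
      field_simp
    · rw [Matrix.diagonal_apply_ne _ hij, if_neg (by simp [Subtype.ext_iff, hij])]
      ring
  obtain ⟨b, hb⟩ := hortho.exists_orthonormalBasis_extension_of_card_eq
    (by simp [finrank_euclideanSpace])
  set U₀ : Matrix (Fin n) (Fin n) ℂ := Matrix.of (fun r i => b i r) with hU₀def
  have hU₀mem : U₀ ∈ Matrix.unitaryGroup (Fin n) ℂ := by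
    rw [Matrix.mem_unitaryGroup_iff']
    ext i j
    have hbij := orthonormal_iff_ite.mp b.orthonormal i j
    rw [EuclideanSpace.inner_eq_star_dotProduct] at hbij
    rw [Matrix.mul_apply, Matrix.one_apply, ← hbij, dotProduct]
    refine Finset.sum_congr rfl fun k _ => ?_
    simp only [Matrix.star_apply, hU₀def, Matrix.of_apply, Pi.star_apply]
    exact mul_comm _ _
  have hAW : A * W = U₀ * D := by
    ext r j
    rw [hDdef, Matrix.mul_diagonal]
    by_cases hj : ε j = 0
    · have hdz := hCCentry j j
      rw [Matrix.diagonal_apply_eq, hj] at hdz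
      simp only [Complex.ofReal_zero, mul_zero] at hdz
      have hsumz : ∑ k, Complex.normSq ((A * W) k j) = 0 := by
        have : ((∑ k, Complex.normSq ((A * W) k j) : ℝ) : ℂ) = 0 := by
          push_cast
          rw [← hdz]
          congr 1
          ext k
          rw [Complex.normSq_eq_conj_mul_self]
        exact_mod_cast this
      have hz : (A * W) r j = 0 := by
        have h8 := (Finset.sum_eq_zero_iff_of_nonneg
          (fun k _ => Complex.normSq_nonneg ((A * W) k j))).mp hsumz r (Finset.mem_univ r)
        exact Complex.normSq_eq_zero.mp h8
      rw [hz, hj]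
      simp
    · have hbj : b j = v j := hb j hj
      have hU₀rj : U₀ r j = ((ε j : ℂ))⁻¹ * (A * W) r j := by
        rw [hU₀def, Matrix.of_apply, hbj, hv]
        rfl
      rw [hU₀rj]
      have hjne : ((ε j : ℝ) : ℂ) ≠ 0 := by simpa using hj
      field_simp
  refine ⟨U₀ * star W, mul_mem hU₀mem (Unitary.star_mem hWmem), ?_⟩
  have hA1 : A = A * W * star W := by rw [mul_assoc, hWW, mul_one]
  rw [hPdef] at hspec ⊢
  rw [hspec, hA1, hAW]
  rw [mul_assoc U₀ (star W) _, mul_assoc W D (star W), ← mul_assoc (star W) W _, hWW',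
    one_mul, ← mul_assoc]

private lemma form_conjT {n : ℕ} (M : Matrix (Fin n) (Fin n) ℂ) (x : Fin n → ℂ) :
    star x ⬝ᵥ Mᴴ *ᵥ x = (starRingEnd ℂ) (star x ⬝ᵥ M *ᵥ x) := by
  simp only [dotProduct, Matrix.mulVec, Matrix.conjTranspose_apply, Pi.star_apply,
    map_sum, _root_.map_mul, Complex.star_def, Complex.conj_conj, Finset.mul_sum]
  rw [Finset.sum_comm]
  refine Finset.sum_congr rfl fun i _ => ?_
  refine Finset.sum_congr rfl fun j _ => ?_
  ring

private lemma herm_form_real {n : ℕ} {M : Matrix (Fin n) (Fin n) ℂ} (hM : M.IsHermitian)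
    (x : Fin n → ℂ) :
    star x ⬝ᵥ M *ᵥ x = (((star x ⬝ᵥ M *ᵥ x).re : ℝ) : ℂ) := by
  have h := form_conjT M x
  rw [hM.eq] at h
  exact (Complex.conj_eq_iff_re.mp h.symm).symm

private lemma reM_isHermitian {n : ℕ} (A : Matrix (Fin n) (Fin n) ℂ) : (reM A).IsHermitian := by
  show (reM A)ᴴ = reM A
  rw [reM, Matrix.conjTranspose_smul, Matrix.conjTranspose_add,
    Matrix.conjTranspose_conjTranspose]
  rw [show star ((1:ℂ)/2) = ((1:ℂ)/2) by simp]
  rw [add_comm]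

private lemma form_reM {n : ℕ} (A : Matrix (Fin n) (Fin n) ℂ) (x : Fin n → ℂ) :
    star x ⬝ᵥ reM A *ᵥ x = (((qf A x).re : ℝ) : ℂ) := by
  rw [reM, Matrix.smul_mulVec, dotProduct_smul, Matrix.add_mulVec, dotProduct_add,
    form_conjT, smul_eq_mul]
  rw [show star x ⬝ᵥ A *ᵥ x = qf A x from rfl, Complex.add_conj]
  push_cast
  ring

private lemma form_unitary_conj {n : ℕ} (M U : Matrix (Fin n) (Fin n) ℂ) (x : Fin n → ℂ) :
    star x ⬝ᵥ (Uᴴ * M * U) *ᵥ x = star (U *ᵥ x) ⬝ᵥ M *ᵥ (U *ᵥ x) := by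
  rw [← Matrix.mulVec_mulVec, ← Matrix.mulVec_mulVec, Matrix.star_mulVec,
    Matrix.dotProduct_mulVec (star x)]

private lemma assemble {n : ℕ} (A : Matrix (Fin n) (Fin n) ℂ) (α s : ℝ)
    {U : Matrix (Fin n) (Fin n) ℂ} (hU : U ∈ Matrix.unitaryGroup (Fin n) ℂ)
    (hkey : ∀ x : Fin n → ℂ, (star x ⬝ᵥ matAbs A *ᵥ x).re
      ≤ (Real.cos α)⁻¹ / 2 * (s * (qf A x).re + s⁻¹ * (qf A (U *ᵥ x)).re)) :
    (((Real.cos α)⁻¹ / 2) • (s • reM A + s⁻¹ • (Uᴴ * reM A * U)) - matAbs A).PosSemidef := by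
  have hH : (reM A).IsHermitian := reM_isHermitian A
  have hP : (matAbs A).PosSemidef := matAbs_posSemidef A
  refine Matrix.PosSemidef.of_dotProduct_mulVec_nonneg ?_ ?_
  · show _ᴴ = _
    rw [Matrix.conjTranspose_sub, Matrix.conjTranspose_smul, Matrix.conjTranspose_add,
      Matrix.conjTranspose_smul, Matrix.conjTranspose_smul, Matrix.conjTranspose_mul,
      Matrix.conjTranspose_mul, Matrix.conjTranspose_conjTranspose, hH.eq, hP.1.eq,
      star_trivial, star_trivial, star_trivial, mul_assoc]
  · intro x
    have e2 : star x ⬝ᵥ (Uᴴ * reM A * U) *ᵥ x = (((qf A (U *ᵥ x)).re : ℝ) : ℂ) := by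
      rw [form_unitary_conj, form_reM]
    have e3 := herm_form_real hP.1 x
    rw [Matrix.sub_mulVec, dotProduct_sub, Matrix.smul_mulVec, dotProduct_smul,
      Matrix.add_mulVec, dotProduct_add, Matrix.smul_mulVec, Matrix.smul_mulVec,
      dotProduct_smul, dotProduct_smul, form_reM, e2, e3]
    rw [Complex.real_smul, Complex.real_smul, Complex.real_smul]
    rw [show ((((Real.cos α)⁻¹ / 2 : ℝ)) : ℂ) * ((s : ℂ) * ((qf A x).re : ℂ)
          + ((s⁻¹ : ℝ) : ℂ) * ((qf A (U *ᵥ x)).re : ℂ))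
        - (((star x ⬝ᵥ matAbs A *ᵥ x).re : ℝ) : ℂ)
        = ((((Real.cos α)⁻¹ / 2) * (s * (qf A x).re + s⁻¹ * (qf A (U *ᵥ x)).re)
            - (star x ⬝ᵥ matAbs A *ᵥ x).re : ℝ) : ℂ) by push_cast; ring]
    exact Complex.zero_le_real.mpr (by linarith [hkey x])

private lemma isHermitian_of_qf_im_zero {n : ℕ} {A : Matrix (Fin n) (Fin n) ℂ}
    (h : ∀ z : Fin n → ℂ, (qf A z).im = 0) : A.IsHermitian := by
  set N : Matrix (Fin n) (Fin n) ℂ := A - Aᴴ with hN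
  have hqfN : ∀ z, star z ⬝ᵥ N *ᵥ z = 0 := by
    intro z
    rw [hN, Matrix.sub_mulVec, dotProduct_sub, form_conjT]
    have h2 : qf A z = ((qf A z).re : ℂ) := by
      have := Complex.re_add_im (qf A z)
      rw [h z] at this
      simpa using this.symm
    rw [show star z ⬝ᵥ A *ᵥ z = qf A z from rfl, h2]
    rw [Complex.conj_ofReal, sub_self]
  have hB : ∀ x y : Fin n → ℂ, star x ⬝ᵥ N *ᵥ y = 0 := by
    intro x y
    have h1 := hqfN (x + (1 : ℂ) • y)
    have h2 := hqfN (x + (Complex.I) • y)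
    have hx := hqfN x
    have hy := hqfN y
    have e1 : ∀ w : ℂ, star (x + w • y) ⬝ᵥ N *ᵥ (x + w • y)
        = star x ⬝ᵥ N *ᵥ x + w * (star x ⬝ᵥ N *ᵥ y) + (starRingEnd ℂ) w * (star y ⬝ᵥ N *ᵥ x)
          + (w * (starRingEnd ℂ) w) * (star y ⬝ᵥ N *ᵥ y) := by
      intro w
      simp only [Matrix.mulVec_add, Matrix.mulVec_smul, dotProduct_add, add_dotProduct,
        star_add, star_smul, smul_dotProduct, dotProduct_smul, smul_eq_mul, Complex.star_def]
      ring
    rw [e1, hx, hy] at h1 h2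
    rw [_root_.map_one] at h1
    rw [Complex.conj_I] at h2
    linear_combination ((1 : ℂ)/2) * h1 - (Complex.I/2) * h2
      + ((star x ⬝ᵥ N *ᵥ y - star y ⬝ᵥ N *ᵥ x)/2) * Complex.I_mul_I
  have hN0 : N = 0 := by
    ext i j
    have := hB (Pi.single i 1) (Pi.single j 1)
    simpa [Matrix.mulVec_single, dotProduct, Pi.single_apply, Pi.star_apply,
      apply_ite, Finset.sum_ite_eq] using this
  show Aᴴ = A
  have := sub_eq_zero.mp (hN ▸ hN0)
  exact this.symm

theorem abs_le_sec_re {n : ℕ} (A : Matrix (Fin n) (Fin n) ℂ) (α : ℝ)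
    (hα₀ : 0 ≤ α) (hα₁ : α < Real.pi / 2) (hA : numRange A ⊆ sector α) :
    ∀ s : ℝ, 0 < s → ∃ U ∈ Matrix.unitaryGroup (Fin n) ℂ,
      (((Real.cos α)⁻¹ / 2) • (s • reM A + s⁻¹ • (Uᴴ * reM A * U))
        - matAbs A).PosSemidef := by
  intro s hs
  rcases eq_or_lt_of_le hα₀ with hα0 | hα0
  · -- case α = 0
    have hα0' : α = 0 := hα0.symm
    subst hα0'
    have him : ∀ z : Fin n → ℂ, (qf A z).im = 0 := by
      intro z
      have h2 := (qf_cone hA z).2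
      rw [Real.tan_zero, mul_zero] at h2
      exact abs_eq_zero.mp (le_antisymm h2 (abs_nonneg _))
    have hherm : A.IsHermitian := isHermitian_of_qf_im_zero him
    have hpsd : A.PosSemidef := by
      refine Matrix.PosSemidef.of_dotProduct_mulVec_nonneg hherm fun z => ?_
      rw [Complex.le_def]
      constructor
      · simpa [qf] using (qf_cone hA z).1
      · simpa [qf] using (him z).symm
    have hmatAbs : matAbs A = A := matAbs_eq_of_psd hpsd
    refine ⟨1, one_mem _, assemble A 0 s (one_mem _) ?_⟩
    intro x
    rw [hmatAbs, Matrix.one_mulVec]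
    rw [show star x ⬝ᵥ A *ᵥ x = qf A x from rfl]
    have h0 := (qf_cone hA x).1
    have h1 : s + s⁻¹ - 2 = (s - 1) ^ 2 / s := by
      field_simp
      ring
    have h2 : 0 ≤ s + s⁻¹ - 2 := by
      rw [h1]
      positivity
    rw [Real.cos_zero, inv_one]
    nlinarith [mul_nonneg h2 h0]
  · -- case 0 < α
    obtain ⟨V, hV, hAV⟩ := exists_polar A
    have hca : 0 < Real.cos α := Real.cos_pos_of_mem_Ioo ⟨by linarith [Real.pi_pos], hα₁⟩
    refine ⟨V, hV, assemble A α s hV ?_⟩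
    intro x
    have hVV : Vᴴ * V = 1 := by
      rw [← Matrix.star_eq_conjTranspose]
      exact Matrix.mem_unitaryGroup_iff'.mp hV
    have hPx : star x ⬝ᵥ matAbs A *ᵥ x = star (V *ᵥ x) ⬝ᵥ A *ᵥ x := by
      conv_rhs => rw [hAV]
      rw [← Matrix.mulVec_mulVec, Matrix.star_mulVec, Matrix.dotProduct_mulVec,
        Matrix.dotProduct_mulVec, Matrix.vecMul_vecMul, hVV, Matrix.vecMul_one,
        Matrix.dotProduct_mulVec]
    have hkb := key_abs_bound hA hα0 hα₁ x (V *ᵥ x)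
    have hxnn := (qf_cone hA x).1
    have hynn := (qf_cone hA (V *ᵥ x)).1
    have hag := amgm_s hs hxnn hynn
    have hre : (star x ⬝ᵥ matAbs A *ᵥ x).re ≤ ‖star (V *ᵥ x) ⬝ᵥ A *ᵥ x‖ := by
      rw [hPx]
      exact Complex.re_le_norm _
    have h2 : Real.cos α * (star x ⬝ᵥ matAbs A *ᵥ x).re
        ≤ Real.sqrt ((qf A x).re * (qf A (V *ᵥ x)).re) :=
      le_trans (mul_le_mul_of_nonneg_left hre hca.le) hkb
    have h3 : (star x ⬝ᵥ matAbs A *ᵥ x).re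
        ≤ (s * (qf A x).re + s⁻¹ * (qf A (V *ᵥ x)).re) / (2 * Real.cos α) := by
      rw [le_div_iff₀ (by positivity)]
      nlinarith
    calc (star x ⬝ᵥ matAbs A *ᵥ x).re
        ≤ (s * (qf A x).re + s⁻¹ * (qf A (V *ᵥ x)).re) / (2 * Real.cos α) := h3
      _ = (Real.cos α)⁻¹ / 2 * (s * (qf A x).re + s⁻¹ * (qf A (V *ᵥ x)).re) := by
          rw [div_eq_mul_inv, mul_inv]
          ring
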